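/- Let φ : ℝ → ℝ be twice continuously differentiable with |φ''| ≤ M, K a kernel supported in [−1,1], h > 0, and s ∈ [h, τ₀ − h]. Then for k odd, |(1/h) ∫₀^{τ₀} ((x−s)/h)^k K((x−s)/h) φ(x) dx| ≤ C h for a constant C depending only on K, k, M, and sup|φ'|. (Interior odd-moment kernel averages are O(h).) -/

import Mathlib

open MeasureTheory

/-- Interior odd-moment kernel averages are `O(h)`: for odd `k` there is a constant `C`
(depending only on `K`, `k`, `M`, `L`, `τ₀`) such that for all interior bandwidth/point
pairs, `|(1/h)∫₀^{τ₀} ((x−s)/h)^k K((x−s)/h) φ(x) dx| ≤ C h`. -/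
theorem odd_moment_kernel_average_order_h
    (τ0 L M : ℝ) (K : ℝ → ℝ) (hKnn : ∀ r, 0 ≤ K r) (hKbdd : ∃ B, ∀ r, K r ≤ B)
    (hKsupp : ∀ r, 1 < |r| → K r = 0) (hKsymm : ∀ r, K (-r) = K r)
    (hKmeas : Measurable K)
    (k : ℕ) (hk : Odd k)
    (φ : ℝ → ℝ) (hφ : ContDiff ℝ 2 φ)
    (hL : ∀ x ∈ Set.Icc (0:ℝ) τ0, |deriv φ x| ≤ L)
    (hM : ∀ x ∈ Set.Icc (0:ℝ) τ0, |deriv (deriv φ) x| ≤ M) :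
    ∃ C : ℝ, 0 ≤ C ∧ ∀ h s : ℝ, 0 < h → h ≤ s → s ≤ τ0 - h →
      |(1/h) * ∫ x in (0:ℝ)..τ0, ((x - s)/h)^k * K ((x - s)/h) * φ x| ≤ C * h := by
  obtain ⟨B, hB⟩ := hKbdd
  set B' : ℝ := max B 0 with hB'def
  set L' : ℝ := max L 0 with hL'def
  have hB'nn : 0 ≤ B' := le_max_right _ _
  have hL'nn : 0 ≤ L' := le_max_right _ _
  have hKB' : ∀ r, K r ≤ B' := fun r => (hB r).trans (le_max_left _ _)
  -- the key bound: |r^k * K r| ≤ B' for all r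
  have hkey : ∀ r : ℝ, |r ^ k * K r| ≤ B' := by
    intro r
    by_cases hr : 1 < |r|
    · simp [hKsupp r hr, hB'nn]
    · push_neg at hr
      rw [abs_mul, abs_of_nonneg (hKnn r)]
      calc |r ^ k| * K r ≤ 1 * B' := by
            apply mul_le_mul _ (hKB' r) (hKnn r) zero_le_one
            rw [abs_pow]; exact pow_le_one₀ (abs_nonneg r) hr
        _ = B' := one_mul _
  have hφc : Continuous φ := hφ.continuous
  have hφd : Differentiable ℝ φ := hφ.differentiable (by norm_num)
  refine ⟨2 * B' * L', by positivity, ?_⟩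
  intro h s hh hhs hsτ
  have hh0 : h ≠ 0 := ne_of_gt hh
  have h0s : 0 ≤ s - h := by linarith
  have hsh : s + h ≤ τ0 := by linarith
  have hsmem : s ∈ Set.Icc (0:ℝ) τ0 := ⟨by linarith, by linarith⟩
  set f : ℝ → ℝ := fun x => ((x - s)/h)^k * K ((x - s)/h) * φ x with hf
  -- pointwise bound for f
  have hfb : ∀ x, |f x| ≤ B' * |φ x| := by
    intro x
    rw [hf, abs_mul]
    exact mul_le_mul_of_nonneg_right (hkey _) (abs_nonneg _)
  -- f is interval integrable on any interval
  have hfmeas : Measurable f := by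
    apply Measurable.mul
    apply Measurable.mul
    · exact (measurable_id.sub_const s).div_const h |>.pow_const k
    · exact hKmeas.comp ((measurable_id.sub_const s).div_const h)
    · exact hφc.measurable
  have hfint : ∀ a b : ℝ, IntervalIntegrable f volume a b := by
    intro a b
    apply IntervalIntegrable.mono_fun'
      (g := fun x => B' * |φ x|)
      ((hφc.abs.intervalIntegrable a b).const_mul B')
      hfmeas.aestronglyMeasurable
    exact Filter.Eventually.of_forall fun x => hfb x
  -- f vanishes strictly outside [s-h, s+h]
  have hfzero : ∀ x, x ∉ Set.Icc (s - h) (s + h) → f x = 0 := by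
    intro x hx
    have : 1 < |(x - s)/h| := by
      simp only [Set.mem_Icc, not_and_or, not_le] at hx
      rw [abs_div, abs_of_pos hh, lt_div_iff₀ hh, one_mul]
      rcases hx with hx | hx
      · rw [abs_sub_comm]; rw [abs_of_pos (by linarith)]; linarith
      · rw [abs_of_pos (by linarith)]; linarith
    rw [hf]; simp [hKsupp _ this]
  -- the left and right pieces of the integral vanish (a.e. equality)
  have hzero_piece : ∀ a b : ℝ, a ≤ b → (∀ x, x ∈ Set.Ioo a b → f x = 0) →
      (∫ x in a..b, f x) = 0 := by
    intro a b hle hab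
    rw [← intervalIntegral.integral_zero (a := a) (b := b) (E := ℝ)]
    apply intervalIntegral.integral_congr_ae
    have hae : ∀ᵐ x : ℝ, x ≠ b := by
      have : (volume : Measure ℝ) {b} = 0 := measure_singleton b
      exact measure_eq_zero_iff_ae_notMem.mp this
    filter_upwards [hae] with x hx hmem
    rw [Set.uIoc_of_le hle] at hmem
    exact hab x ⟨hmem.1, lt_of_le_of_ne hmem.2 hx⟩
  have hsplit : (∫ x in (0:ℝ)..τ0, f x) = ∫ x in (s-h)..(s+h), f x := by
    have e1 : (∫ x in (0:ℝ)..(s-h), f x) = 0 := by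
      apply hzero_piece _ _ h0s; intro x hx; apply hfzero
      simp only [Set.mem_Icc, not_and_or, not_le]; left; exact hx.2
    have e2 : (∫ x in (s+h)..τ0, f x) = 0 := by
      apply hzero_piece _ _ hsh; intro x hx; apply hfzero
      simp only [Set.mem_Icc, not_and_or, not_le]; right; exact hx.1
    have := intervalIntegral.integral_add_adjacent_intervals
      (hfint 0 (s-h)) (hfint (s-h) τ0)
    rw [← this, e1, zero_add]
    have := intervalIntegral.integral_add_adjacent_intervals
      (hfint (s-h) (s+h)) (hfint (s+h) τ0)
    rw [← this, e2, add_zero]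
  -- change of variables
  have hcov : (∫ x in (s-h)..(s+h), f x) = h * ∫ u in (-1:ℝ)..1, f (h * u + s) := by
    have := intervalIntegral.smul_integral_comp_mul_add (f := f) (a := (-1:ℝ)) (b := 1) h s
    rw [smul_eq_mul, show h * -1 + s = s - h by ring, show h * 1 + s = s + h by ring] at this
    exact this.symm
  have hfcomp : ∀ u : ℝ, f (h * u + s) = u ^ k * K u * φ (s + h * u) := by
    intro u
    show ((h*u+s - s)/h)^k * K ((h*u+s - s)/h) * φ (h*u+s) = u ^ k * K u * φ (s + h * u)
    rw [show (h*u+s-s)/h = u by field_simp; ring, show h*u+s = s+h*u by ring]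
  -- the odd moment of K vanishes
  set g : ℝ → ℝ := fun u => u ^ k * K u with hg
  have hgmeas : Measurable g := (measurable_id.pow_const k).mul hKmeas
  have hgodd : ∀ u, g (-u) = - g u := by
    intro u
    rw [hg]
    simp only
    rw [hKsymm, hk.neg_pow]
    ring
  have hgint : ∀ (ψ : ℝ → ℝ), Continuous ψ →
      IntervalIntegrable (fun u => g u * ψ u) volume (-1) 1 := by
    intro ψ hψ
    apply IntervalIntegrable.mono_fun'
      (g := fun u => B' * |ψ u|)
      ((hψ.abs.intervalIntegrable _ _).const_mul B')
      ((hgmeas.mul hψ.measurable).aestronglyMeasurable)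
    apply Filter.Eventually.of_forall
    intro u
    simp only [Real.norm_eq_abs, abs_mul, Pi.mul_apply]
    exact mul_le_mul_of_nonneg_right (hkey u) (abs_nonneg _)
  have hJ : (∫ u in (-1:ℝ)..1, g u) = 0 := by
    have h1 : (∫ u in (-1:ℝ)..1, g (-u)) = ∫ u in (-1:ℝ)..1, g u := by
      rw [intervalIntegral.integral_comp_neg]; norm_num
    have h2 : (∫ u in (-1:ℝ)..1, g (-u)) = - ∫ u in (-1:ℝ)..1, g u := by
      simp_rw [hgodd]
      exact intervalIntegral.integral_neg
    linarith [h1, h2]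
  -- main estimate
  have hI : (∫ u in (-1:ℝ)..1, g u * φ (s + h * u))
      = ∫ u in (-1:ℝ)..1, g u * (φ (s + h * u) - φ s) := by
    have hint1 : IntervalIntegrable (fun u => g u * φ (s + h * u)) volume (-1) 1 :=
      hgint _ (hφc.comp (continuous_const.add (continuous_const.mul continuous_id)))
    have hint2 : IntervalIntegrable (fun u => g u * φ s) volume (-1) 1 :=
      hgint _ continuous_const
    have : (∫ u in (-1:ℝ)..1, g u * (φ (s + h * u) - φ s))
        = (∫ u in (-1:ℝ)..1, g u * φ (s + h * u)) - ∫ u in (-1:ℝ)..1, g u * φ s := by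
      rw [← intervalIntegral.integral_sub hint1 hint2]
      congr 1; funext u; ring
    rw [this, intervalIntegral.integral_mul_const, hJ]
    ring
  -- mean value bound
  have hmvt : ∀ u ∈ Set.uIoc (-1:ℝ) 1, ‖g u * (φ (s + h * u) - φ s)‖ ≤ B' * (L' * h) := by
    intro u hu
    rw [Set.uIoc_of_le (by norm_num : (-1:ℝ) ≤ 1)] at hu
    have hu1 : |u| ≤ 1 := abs_le.mpr ⟨hu.1.le, hu.2⟩
    have hmem : s + h * u ∈ Set.Icc (0:ℝ) τ0 := by
      constructor
      · nlinarith [neg_abs_le u]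
      · nlinarith [le_abs_self u]
    have hdiff : ‖φ (s + h * u) - φ s‖ ≤ L' * ‖(s + h * u) - s‖ := by
      apply Convex.norm_image_sub_le_of_norm_deriv_le
        (fun x _ => hφd x) (fun x hx => (hL x hx).trans (le_max_left _ _))
        (convex_Icc 0 τ0) hsmem hmem
    have hnorm : ‖(s + h * u) - s‖ ≤ h := by
      simp only [add_sub_cancel_left, Real.norm_eq_abs, abs_mul, abs_of_pos hh]
      nlinarith
    rw [norm_mul]
    apply mul_le_mul (by rw [Real.norm_eq_abs]; exact hkey u) _ (norm_nonneg _) hB'nn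
    calc ‖φ (s + h * u) - φ s‖ ≤ L' * ‖(s + h * u) - s‖ := hdiff
      _ ≤ L' * h := by exact mul_le_mul_of_nonneg_left hnorm hL'nn
  -- put everything together
  have hbound : ‖∫ u in (-1:ℝ)..1, g u * (φ (s + h * u) - φ s)‖ ≤ (B' * (L' * h)) * 2 := by
    have := intervalIntegral.norm_integral_le_of_norm_le_const hmvt
    norm_num at this ⊢
    linarith
  have hrw : (∫ u in (-1:ℝ)..1, f (h * u + s)) = ∫ u in (-1:ℝ)..1, g u * φ (s + h * u) :=
    intervalIntegral.integral_congr fun u _ => by rw [hfcomp u]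
  calc |(1/h) * ∫ x in (0:ℝ)..τ0, f x|
      = |(1/h) * (h * ∫ u in (-1:ℝ)..1, g u * φ (s + h * u))| := by
        rw [hsplit, hcov, hrw]
    _ = |∫ u in (-1:ℝ)..1, g u * φ (s + h * u)| := by
        rw [← mul_assoc, one_div, inv_mul_cancel₀ hh0, one_mul]
    _ ≤ (B' * (L' * h)) * 2 := by rw [hI]; exact hbound
    _ = 2 * B' * L' * h := by ring
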